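/- Let n ≥ 1, 0 < α < n, 0 < q < ∞ and A > 0. There exists a constant C_s > 0, depending only on n, q, α and A, such that the following holds: for every nonnegative locally finite Borel measure μ on ℝ^n, every λ > 0, every ε with 0 < ε < 1, every r₀ > 0, and all points x, y ∈ ℝ^n with |x − y| ≤ A r₀, if (T^q_α(μ)(y))^q ≤ λ and (M_α(μ)(x))^q ≤ ελ, then ∫_{r₀}^∞ (μ(B(x,r))/r^{n−α})^q dr/r ≤ (1 + C_s ε) λ. -/

import Mathlib

open MeasureTheory Metric Set ENNReal

noncomputable section

/-- The nonlinear potential `T^q_α(μ)(x) = (∫_0^∞ (μ(B(x,r))/r^{n−α})^q dr/r)^{1/q}`. -/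
def Tpot (n : ℕ) (α q : ℝ) (μ : Measure (EuclideanSpace ℝ (Fin n)))
    (x : EuclideanSpace ℝ (Fin n)) : ℝ≥0∞ :=
  (∫⁻ r in Set.Ioi (0 : ℝ),
      (μ (Metric.ball x r) / ENNReal.ofReal (r ^ ((n : ℝ) - α))) ^ q
        * ENNReal.ofReal (1 / r)) ^ (1 / q)

/-- The fractional maximal function `M_α(μ)(x) = sup_{r>0} μ(B(x,r))/r^{n−α}`. -/
def Mfrac (n : ℕ) (α : ℝ) (μ : Measure (EuclideanSpace ℝ (Fin n)))
    (x : EuclideanSpace ℝ (Fin n)) : ℝ≥0∞ :=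
  ⨆ (r : ℝ) (_ : 0 < r), μ (Metric.ball x r) / ENNReal.ofReal (r ^ ((n : ℝ) - α))

/-- The closed axis-parallel cube with center `c` and side length `s`. -/
def axisCube (n : ℕ) (c : EuclideanSpace ℝ (Fin n)) (s : ℝ) :
    Set (EuclideanSpace ℝ (Fin n)) :=
  {x | ∀ i, |x i - c i| ≤ s / 2}

/-- The weighted measure `|S|_σ = ∫_S σ dx`. -/
def wMeasure (n : ℕ) (σ : EuclideanSpace ℝ (Fin n) → ℝ)
    (S : Set (EuclideanSpace ℝ (Fin n))) : ℝ≥0∞ :=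
  ∫⁻ x in S, ENNReal.ofReal (σ x)

/-- `σ` is a weak `A∞` weight with constants `Cσ, θ`: it is nonnegative, locally
integrable, and `|E|_σ ≤ Cσ (|E|/|Q|)^θ |2Q|_σ` for all cubes `Q` and measurable `E ⊆ Q`. -/
def IsWeakAInfty (n : ℕ) (σ : EuclideanSpace ℝ (Fin n) → ℝ) (Cσ θ : ℝ) : Prop :=
  0 < Cσ ∧ 0 < θ ∧ (∀ x, 0 ≤ σ x) ∧ LocallyIntegrable σ ∧
    ∀ (c : EuclideanSpace ℝ (Fin n)) (s : ℝ), 0 < s →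
      ∀ E ⊆ axisCube n c s, MeasurableSet E →
        wMeasure n σ E ≤
          ENNReal.ofReal (Cσ * ((volume E).toReal / (volume (axisCube n c s)).toReal) ^ θ)
            * wMeasure n σ (axisCube n c (2 * s))

/-- The dyadic cube `2^k(m + [0,1)^n)`. -/
def dyadicCube (n : ℕ) (k : ℤ) (m : Fin n → ℤ) : Set (EuclideanSpace ℝ (Fin n)) :=
  {x | ∀ i, (2 : ℝ) ^ k * m i ≤ x i ∧ x i < (2 : ℝ) ^ k * (m i + 1)}

/-- The unique dyadic cube of side length `2^k` containing `x`. -/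
def dyadicCubeAt (n : ℕ) (k : ℤ) (x : EuclideanSpace ℝ (Fin n)) :
    Set (EuclideanSpace ℝ (Fin n)) :=
  dyadicCube n k (fun i => ⌊x i / (2 : ℝ) ^ k⌋)

/-- The dyadic nonlinear potential `𝒯(μ)(x) = (∑_{Q ∋ x} (μ(Q)/ℓ(Q)^{n−α})^q)^{1/q}`. -/
def Tdyadic (n : ℕ) (α q : ℝ) (μ : Measure (EuclideanSpace ℝ (Fin n)))
    (x : EuclideanSpace ℝ (Fin n)) : ℝ≥0∞ :=
  (∑' k : ℤ,
      (μ (dyadicCubeAt n k x) / ENNReal.ofReal (((2 : ℝ) ^ k) ^ ((n : ℝ) - α))) ^ q) ^ (1 / q)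

/-- The dyadic fractional maximal function `ℳ_α(μ)(x) = sup_{Q ∋ x} μ(Q)/ℓ(Q)^{n−α}`. -/
def Mdyadic (n : ℕ) (α : ℝ) (μ : Measure (EuclideanSpace ℝ (Fin n)))
    (x : EuclideanSpace ℝ (Fin n)) : ℝ≥0∞ :=
  ⨆ k : ℤ, μ (dyadicCubeAt n k x) / ENNReal.ofReal (((2 : ℝ) ^ k) ^ ((n : ℝ) - α))

/-- `F(μ)(x) = (∑_{j∈ℤ} (μ(B(x,2^j))/2^{j(n−α)})^q)^{1/q}`. -/
def Fpot (n : ℕ) (α q : ℝ) (μ : Measure (EuclideanSpace ℝ (Fin n)))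
    (x : EuclideanSpace ℝ (Fin n)) : ℝ≥0∞ :=
  (∑' j : ℤ,
      (μ (Metric.ball x ((2 : ℝ) ^ j)) / ENNReal.ofReal (((2 : ℝ) ^ j) ^ ((n : ℝ) - α))) ^ q) ^ (1 / q)

/-- The exponential function extended to `ℝ≥0∞`. -/
def expE (t : ℝ≥0∞) : ℝ≥0∞ :=
  if t = ⊤ then ⊤ else ENNReal.ofReal (Real.exp t.toReal)

/-- The centered Hardy–Littlewood maximal function of a measure. -/
def Mhl (n : ℕ) (ν : Measure (EuclideanSpace ℝ (Fin n)))
    (x : EuclideanSpace ℝ (Fin n)) : ℝ≥0∞ :=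
  ⨆ (r : ℝ) (_ : 0 < r), ν (Metric.ball x r) / volume (Metric.ball x r)

/-- **Tail estimate for the continuous potential** (proof of Theorem 1.4): if
`|x − y| ≤ A r₀`, `(T^q_α(μ)(y))^q ≤ λ` and `(M_α(μ)(x))^q ≤ ελ`, then
`∫_{r₀}^∞ (μ(B(x,r))/r^{n−α})^q dr/r ≤ (1 + C_s ε)λ`. -/

lemma exp_aux' {t B : ℝ} (ht : 0 ≤ t) (htB : t ≤ B) :
    Real.exp t ≤ 1 + t * Real.exp B := by
  have h2 : Real.exp (-t) * Real.exp t = 1 := by rw [← Real.exp_add]; simp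
  have h1 : -t + 1 ≤ Real.exp (-t) := Real.add_one_le_exp (-t)
  have h3 : (0:ℝ) < Real.exp t := Real.exp_pos t
  have h4 : Real.exp t ≤ Real.exp B := Real.exp_le_exp.mpr htB
  nlinarith [mul_le_mul_of_nonneg_right h1 h3.le, mul_le_mul_of_nonneg_left h4 ht]

lemma onePlus_rpow_le' {t β B : ℝ} (ht : 0 ≤ t) (htB : t ≤ B) (hβ : 0 < β) :
    (1 + t) ^ β ≤ 1 + β * Real.exp (β * B) * t := by
  have h0 : (0:ℝ) < 1 + t := by linarith
  have hlog : Real.log (1 + t) ≤ t := by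
    have := Real.log_le_sub_one_of_pos h0; linarith
  have h1 : (1 + t) ^ β ≤ Real.exp (β * t) := by
    rw [Real.rpow_def_of_pos h0]
    exact Real.exp_le_exp.mpr (by nlinarith)
  have h2 : Real.exp (β * t) ≤ 1 + (β * t) * Real.exp (β * B) :=
    exp_aux' (by positivity) (by nlinarith)
  calc (1 + t) ^ β ≤ Real.exp (β * t) := h1
    _ ≤ 1 + (β * t) * Real.exp (β * B) := h2
    _ = 1 + β * Real.exp (β * B) * t := by ring

lemma shift_lint (G : ℝ → ℝ≥0∞) (a c : ℝ) :
    ∫⁻ r in Set.Ioi c, G (r + a) = ∫⁻ s in Set.Ioi (c + a), G s := by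
  rw [← lintegral_indicator measurableSet_Ioi, ← lintegral_indicator measurableSet_Ioi,
    ← lintegral_add_right_eq_self (fun s => (Set.Ioi (c + a)).indicator G s) a]
  congr 1
  ext r
  simp only [Set.indicator_apply, Set.mem_Ioi, add_lt_add_iff_right]

lemma err_lint {c r₀ : ℝ} (hc : 0 ≤ c) (hr : 0 < r₀) :
    ∫⁻ r in Set.Ioi r₀, ENNReal.ofReal (c / r ^ 2) = ENNReal.ofReal (c / r₀) := by
  have hcongr : ∫⁻ r in Set.Ioi r₀, ENNReal.ofReal (c / r ^ 2)
      = ∫⁻ r in Set.Ioi r₀, ENNReal.ofReal (c * r ^ (-2 : ℝ)) := by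
    refine setLIntegral_congr_fun measurableSet_Ioi (fun r hr' => ?_)
    have hr0 : (0:ℝ) < r := hr.trans hr'
    rw [Real.rpow_neg hr0.le, show ((2:ℝ)) = ((2:ℕ):ℝ) by norm_num, Real.rpow_natCast]
    rw [div_eq_mul_inv]
  rw [hcongr]
  have hint : IntegrableOn (fun r : ℝ => r ^ (-2 : ℝ)) (Set.Ioi r₀) :=
    integrableOn_Ioi_rpow_of_lt (by norm_num) hr
  have hint' : Integrable (fun r : ℝ => c * r ^ (-2 : ℝ)) (volume.restrict (Set.Ioi r₀)) :=
    hint.const_mul c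
  rw [← ofReal_integral_eq_lintegral_ofReal hint' ?nn]
  case nn =>
    filter_upwards [self_mem_ae_restrict measurableSet_Ioi] with r hr'
    have hr0 : (0:ℝ) < r := hr.trans hr'
    positivity
  rw [MeasureTheory.integral_const_mul, integral_Ioi_rpow_of_lt (by norm_num) hr]
  norm_num
  rw [Real.rpow_neg_one, div_eq_mul_inv]

set_option maxHeartbeats 1000000 in
theorem continuous_tail_estimate_tau (n : ℕ) (hn : 1 ≤ n) (α q A : ℝ)
    (hα : 0 < α) (hαn : α < n) (hq : 0 < q) (hA : 0 < A) :
    ∃ Cs : ℝ, 0 < Cs ∧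
      ∀ (μ : Measure (EuclideanSpace ℝ (Fin n))), IsLocallyFiniteMeasure μ →
        ∀ lam ε r₀ : ℝ, 0 < lam → 0 < ε → ε < 1 → 0 < r₀ →
          ∀ x y : EuclideanSpace ℝ (Fin n), dist x y ≤ A * r₀ →
            (Tpot n α q μ y) ^ q ≤ ENNReal.ofReal lam →
            (Mfrac n α μ x) ^ q ≤ ENNReal.ofReal (ε * lam) →
            ∫⁻ r in Set.Ioi r₀,
                (μ (Metric.ball x r) / ENNReal.ofReal (r ^ ((n : ℝ) - α))) ^ q
                  * ENNReal.ofReal (1 / r)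
              ≤ ENNReal.ofReal ((1 + Cs * ε) * lam) := by
  have hp : (0:ℝ) < (n : ℝ) - α := by
    have : (α:ℝ) < (n:ℝ) := hαn
    linarith
  set β : ℝ := ((n:ℝ) - α) * q with hβdef
  clear_value β
  have hβ : 0 < β := by rw [hβdef]; exact mul_pos hp hq
  set D₀ : ℝ := β * Real.exp (β * A) * A with hD₀def
  clear_value D₀
  have hD₀ : 0 < D₀ := by rw [hD₀def]; positivity
  refine ⟨2 ^ β * (A + D₀), by positivity, ?_⟩
  intro μ _ lam ε r₀ hlam hε hε1 hr₀ x y hxy hT hM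
  set c1 : ℝ := 2 ^ β * (ε * lam) with hc1def
  clear_value c1
  have hc1 : 0 < c1 := by rw [hc1def]; positivity
  set G : ℝ → ℝ≥0∞ := fun s =>
    (μ (Metric.ball y s) / ENNReal.ofReal (s ^ ((n:ℝ) - α))) ^ q * ENNReal.ofReal (1 / s)
    with hGdef
  clear_value G
  -- total integral of G is at most lam
  have hG_total : ∫⁻ s in Set.Ioi (0:ℝ), G s ≤ ENNReal.ofReal lam := by
    have hTe : Tpot n α q μ y ^ q = ∫⁻ s in Set.Ioi (0:ℝ), G s := by
      simp only [hGdef]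
      rw [Tpot, ← ENNReal.rpow_mul, one_div_mul_cancel hq.ne', ENNReal.rpow_one]
    rw [← hTe]; exact hT
  -- maximal function bound
  have hMle : ∀ s : ℝ, 0 < s →
      μ (Metric.ball x s) ≤ Mfrac n α μ x * ENNReal.ofReal (s ^ ((n:ℝ) - α)) := by
    intro s hs
    have h1 : μ (Metric.ball x s) / ENNReal.ofReal (s ^ ((n:ℝ) - α)) ≤ Mfrac n α μ x := by
      rw [Mfrac]
      exact le_iSup₂ (f := fun r (_ : 0 < r) =>
        μ (Metric.ball x r) / ENNReal.ofReal (r ^ ((n:ℝ) - α))) s hs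
    have hsp : (0:ℝ) < s ^ ((n:ℝ) - α) := Real.rpow_pos_of_pos hs _
    exact (ENNReal.div_le_iff (ENNReal.ofReal_pos.mpr hsp).ne' ENNReal.ofReal_ne_top).mp h1
  -- pointwise key estimate
  have key : ∀ r ∈ Set.Ioi r₀,
      (μ (Metric.ball x r) / ENNReal.ofReal (r ^ ((n:ℝ) - α))) ^ q * ENNReal.ofReal (1 / r)
        ≤ G (r + A * r₀) + ENNReal.ofReal ((2 ^ β * (A + D₀)) * (ε * lam) * r₀ / r ^ 2) := by
    intro r hr
    rw [Set.mem_Ioi] at hr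
    have hr0 : (0:ℝ) < r := hr₀.trans hr
    set v : ℝ := r + A * r₀ with hvdef
    clear_value v
    have hv0 : (0:ℝ) < v := by rw [hvdef]; positivity
    have hrv : r ≤ v := by rw [hvdef]; nlinarith
    have hball1 : Metric.ball x r ⊆ Metric.ball y v := by
      intro z hz
      rw [Metric.mem_ball] at hz ⊢
      calc dist z y ≤ dist z x + dist x y := dist_triangle z x y
        _ < v := by rw [hvdef]; linarith
    have hball2 : Metric.ball y v ⊆ Metric.ball x (v + A * r₀) := by
      intro z hz
      rw [Metric.mem_ball] at hz ⊢
      have hyx : dist y x ≤ A * r₀ := by rw [dist_comm]; exact hxy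
      calc dist z x ≤ dist z y + dist y x := dist_triangle z y x
        _ < v + A * r₀ := by linarith
    have hab : μ (Metric.ball x r) ≤ μ (Metric.ball y v) := measure_mono hball1
    have hrp : (0:ℝ) < r ^ ((n:ℝ) - α) := Real.rpow_pos_of_pos hr0 _
    have hvp : (0:ℝ) < v ^ ((n:ℝ) - α) := Real.rpow_pos_of_pos hv0 _
    set g1q : ℝ≥0∞ := (μ (Metric.ball y v) / ENNReal.ofReal (v ^ ((n:ℝ) - α))) ^ q with hg1qdef
    clear_value g1q
    -- step 1 : compare with ball at y
    have hkey : (ENNReal.ofReal (v ^ ((n:ℝ) - α)))⁻¹ * ENNReal.ofReal ((v / r) ^ ((n:ℝ) - α))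
        = (ENNReal.ofReal (r ^ ((n:ℝ) - α)))⁻¹ := by
      rw [Real.div_rpow hv0.le hr0.le, ENNReal.ofReal_div_of_pos hrp, div_eq_mul_inv,
        ← mul_assoc, ENNReal.inv_mul_cancel (ENNReal.ofReal_pos.mpr hvp).ne'
          ENNReal.ofReal_ne_top, one_mul]
    have step1 : μ (Metric.ball x r) / ENNReal.ofReal (r ^ ((n:ℝ) - α))
        ≤ μ (Metric.ball y v) / ENNReal.ofReal (v ^ ((n:ℝ) - α))
            * ENNReal.ofReal ((v / r) ^ ((n:ℝ) - α)) := by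
      rw [div_eq_mul_inv, div_eq_mul_inv, mul_assoc, hkey]
      exact mul_le_mul_left hab _
    have hvr0 : (0:ℝ) < v / r := div_pos hv0 hr0
    have step2 : (μ (Metric.ball x r) / ENNReal.ofReal (r ^ ((n:ℝ) - α))) ^ q
        ≤ g1q * ENNReal.ofReal ((v / r) ^ β) := by
      calc (μ (Metric.ball x r) / ENNReal.ofReal (r ^ ((n:ℝ) - α))) ^ q
          ≤ (μ (Metric.ball y v) / ENNReal.ofReal (v ^ ((n:ℝ) - α))
              * ENNReal.ofReal ((v / r) ^ ((n:ℝ) - α))) ^ q :=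
            ENNReal.rpow_le_rpow step1 hq.le
        _ = g1q * (ENNReal.ofReal ((v / r) ^ ((n:ℝ) - α))) ^ q := by
            rw [hg1qdef]; exact ENNReal.mul_rpow_of_nonneg _ _ hq.le
        _ = g1q * ENNReal.ofReal (((v / r) ^ ((n:ℝ) - α)) ^ q) := by
            rw [ENNReal.ofReal_rpow_of_pos (Real.rpow_pos_of_pos hvr0 _)]
        _ = g1q * ENNReal.ofReal ((v / r) ^ β) := by
            rw [hβdef, Real.rpow_mul hvr0.le]
    -- step 3 : bound g1q
    have hg1q : g1q ≤ ENNReal.ofReal c1 := by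
      have hb2 : μ (Metric.ball y v) ≤ Mfrac n α μ x * ENNReal.ofReal ((v + A * r₀) ^ ((n:ℝ) - α)) :=
        le_trans (measure_mono hball2) (hMle _ (by positivity))
      have hg1 : μ (Metric.ball y v) / ENNReal.ofReal (v ^ ((n:ℝ) - α))
          ≤ Mfrac n α μ x * ENNReal.ofReal ((2:ℝ) ^ ((n:ℝ) - α)) := by
        rw [ENNReal.div_le_iff (ENNReal.ofReal_pos.mpr hvp).ne' ENNReal.ofReal_ne_top]
        refine hb2.trans ?_
        rw [mul_assoc, ← ENNReal.ofReal_mul (by positivity)]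
        refine mul_le_mul_right (ENNReal.ofReal_le_ofReal ?_) _
        have h2v : v + A * r₀ ≤ 2 * v := by rw [hvdef]; nlinarith
        calc (v + A * r₀) ^ ((n:ℝ) - α) ≤ (2 * v) ^ ((n:ℝ) - α) :=
              Real.rpow_le_rpow (by positivity) h2v hp.le
          _ = 2 ^ ((n:ℝ) - α) * v ^ ((n:ℝ) - α) := Real.mul_rpow (by norm_num) hv0.le
      calc g1q ≤ (Mfrac n α μ x * ENNReal.ofReal ((2:ℝ) ^ ((n:ℝ) - α))) ^ q := by
            rw [hg1qdef]; exact ENNReal.rpow_le_rpow hg1 hq.le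
        _ = (Mfrac n α μ x) ^ q * (ENNReal.ofReal ((2:ℝ) ^ ((n:ℝ) - α))) ^ q :=
            ENNReal.mul_rpow_of_nonneg _ _ hq.le
        _ ≤ ENNReal.ofReal (ε * lam) * ENNReal.ofReal ((2:ℝ) ^ β) := by
            refine mul_le_mul' hM (le_of_eq ?_)
            rw [ENNReal.ofReal_rpow_of_pos (by positivity), hβdef, Real.rpow_mul (by norm_num)]
        _ = ENNReal.ofReal c1 := by
            rw [← ENNReal.ofReal_mul (by positivity), hc1def]
            congr 1
            ring
    -- step 4 : real estimate for (v/r)^β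
    have ht0 : (0:ℝ) ≤ A * r₀ / r := by positivity
    have htA : A * r₀ / r ≤ A := by
      rw [div_le_iff₀ hr0]
      nlinarith
    have hreal : (v / r) ^ β ≤ 1 + D₀ * (r₀ / r) := by
      have hvr : v / r = 1 + A * r₀ / r := by rw [hvdef]; field_simp
      rw [hvr]
      refine (onePlus_rpow_le' ht0 htA hβ).trans (le_of_eq ?_)
      rw [hD₀def]
      field_simp
    -- step 5 : additive comparison
    have step5 : (μ (Metric.ball x r) / ENNReal.ofReal (r ^ ((n:ℝ) - α))) ^ q
        ≤ g1q + ENNReal.ofReal (c1 * (D₀ * (r₀ / r))) := by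
      refine step2.trans ?_
      calc g1q * ENNReal.ofReal ((v / r) ^ β)
          ≤ g1q * ENNReal.ofReal (1 + D₀ * (r₀ / r)) :=
            mul_le_mul_right (ENNReal.ofReal_le_ofReal hreal) _
        _ = g1q * (1 + ENNReal.ofReal (D₀ * (r₀ / r))) := by
            rw [ENNReal.ofReal_add (by norm_num) (by positivity), ENNReal.ofReal_one]
        _ = g1q + g1q * ENNReal.ofReal (D₀ * (r₀ / r)) := by rw [mul_add, mul_one]
        _ ≤ g1q + ENNReal.ofReal c1 * ENNReal.ofReal (D₀ * (r₀ / r)) :=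
            add_le_add_right (mul_le_mul_left hg1q _) _
        _ = g1q + ENNReal.ofReal (c1 * (D₀ * (r₀ / r))) := by
            rw [← ENNReal.ofReal_mul hc1.le]
    -- step 6 : split 1/r and conclude
    have hsplit : (1:ℝ) / r ≤ 1 / v + A * r₀ / r ^ 2 := by
      rw [hvdef, div_add_div _ _ (by positivity : (r + A * r₀) ≠ 0)
        (by positivity : (r:ℝ) ^ 2 ≠ 0), div_le_div_iff₀ hr0 (by positivity)]
      nlinarith [mul_nonneg (mul_nonneg (mul_nonneg hA.le hr₀.le) (mul_nonneg hA.le hr₀.le)) hr0.le]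
    have h1r : ENNReal.ofReal (1 / r)
        ≤ ENNReal.ofReal (1 / v) + ENNReal.ofReal (A * r₀ / r ^ 2) := by
      rw [← ENNReal.ofReal_add (by positivity) (by positivity)]
      exact ENNReal.ofReal_le_ofReal hsplit
    have hGv : g1q * ENNReal.ofReal (1 / v) = G v := by simp only [hg1qdef, hGdef]
    calc (μ (Metric.ball x r) / ENNReal.ofReal (r ^ ((n:ℝ) - α))) ^ q * ENNReal.ofReal (1 / r)
        ≤ (g1q + ENNReal.ofReal (c1 * (D₀ * (r₀ / r)))) * ENNReal.ofReal (1 / r) :=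
          mul_le_mul_left step5 _
      _ = g1q * ENNReal.ofReal (1 / r)
            + ENNReal.ofReal (c1 * (D₀ * (r₀ / r))) * ENNReal.ofReal (1 / r) := add_mul _ _ _
      _ ≤ g1q * (ENNReal.ofReal (1 / v) + ENNReal.ofReal (A * r₀ / r ^ 2))
            + ENNReal.ofReal (c1 * (D₀ * (r₀ / r))) * ENNReal.ofReal (1 / r) :=
          add_le_add_left (mul_le_mul_right h1r _) _
      _ = g1q * ENNReal.ofReal (1 / v) + g1q * ENNReal.ofReal (A * r₀ / r ^ 2)
            + ENNReal.ofReal (c1 * (D₀ * (r₀ / r))) * ENNReal.ofReal (1 / r) := by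
          rw [mul_add]
      _ ≤ g1q * ENNReal.ofReal (1 / v) + ENNReal.ofReal c1 * ENNReal.ofReal (A * r₀ / r ^ 2)
            + ENNReal.ofReal (c1 * (D₀ * (r₀ / r))) * ENNReal.ofReal (1 / r) :=
          add_le_add_left (add_le_add_right (mul_le_mul_left hg1q _) _) _
      _ = G v + ENNReal.ofReal (c1 * (A * r₀ / r ^ 2) + c1 * (D₀ * (r₀ / r)) * (1 / r)) := by
          rw [hGv, ← ENNReal.ofReal_mul hc1.le, ← ENNReal.ofReal_mul (by positivity),
            add_assoc, ← ENNReal.ofReal_add (by positivity) (by positivity)]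
      _ ≤ G v + ENNReal.ofReal ((2 ^ β * (A + D₀)) * (ε * lam) * r₀ / r ^ 2) := by
          refine add_le_add_right (ENNReal.ofReal_le_ofReal (le_of_eq ?_)) _
          rw [hc1def]
          field_simp
  -- integrate
  have hmeas_err : Measurable fun r : ℝ =>
      ENNReal.ofReal ((2 ^ β * (A + D₀)) * (ε * lam) * r₀ / r ^ 2) := by
    exact ENNReal.measurable_ofReal.comp (measurable_const.div ((measurable_id.pow_const 2)))
  calc ∫⁻ r in Set.Ioi r₀,
          (μ (Metric.ball x r) / ENNReal.ofReal (r ^ ((n:ℝ) - α))) ^ q * ENNReal.ofReal (1 / r)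
      ≤ ∫⁻ r in Set.Ioi r₀,
          (G (r + A * r₀) + ENNReal.ofReal ((2 ^ β * (A + D₀)) * (ε * lam) * r₀ / r ^ 2)) :=
        setLIntegral_mono' measurableSet_Ioi key
    _ = (∫⁻ r in Set.Ioi r₀, G (r + A * r₀))
          + ∫⁻ r in Set.Ioi r₀, ENNReal.ofReal ((2 ^ β * (A + D₀)) * (ε * lam) * r₀ / r ^ 2) :=
        lintegral_add_right _ hmeas_err
    _ = (∫⁻ s in Set.Ioi (r₀ + A * r₀), G s)
          + ENNReal.ofReal ((2 ^ β * (A + D₀)) * (ε * lam) * r₀ / r₀) := by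
        rw [shift_lint, err_lint (by positivity) hr₀]
    _ ≤ (∫⁻ s in Set.Ioi (0:ℝ), G s) + ENNReal.ofReal ((2 ^ β * (A + D₀)) * (ε * lam)) := by
        refine add_le_add ?_ ?_
        · exact lintegral_mono' (Measure.restrict_mono
            (Set.Ioi_subset_Ioi (by positivity)) le_rfl) le_rfl
        · refine ENNReal.ofReal_le_ofReal (le_of_eq ?_)
          rw [mul_div_assoc, div_self hr₀.ne', mul_one]
    _ ≤ ENNReal.ofReal lam + ENNReal.ofReal ((2 ^ β * (A + D₀)) * (ε * lam)) :=
        add_le_add_left hG_total _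
    _ = ENNReal.ofReal ((1 + 2 ^ β * (A + D₀) * ε) * lam) := by
        rw [← ENNReal.ofReal_add hlam.le (by positivity)]
        congr 1
        ring

end
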